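/- Let f : F_2^n × F_2^n → F_2 be given by f(x,y) = ⟨x, σ(y)⟩ ⊕ ψ(y) for some map σ : F_2^n → F_2^n and ψ : F_2^n → F_2. If f is a bent function, then σ is a bijection. -/

import Mathlib

abbrev Bv (n : ℕ) := Fin n → ZMod 2

/-- The standard inner product on `F_2^n`. -/
def ip (n : ℕ) (a b : Bv n) : ZMod 2 := ∑ i, a i * b i

/-- The inner product on `F_2^n × F_2^n`. -/
def ipP (n : ℕ) (a x : Bv n × Bv n) : ZMod 2 := ip n a.1 x.1 + ip n a.2 x.2

/-- A function in `2n` variables is bent if all its Walsh–Hadamard coefficients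
have absolute value `2^n`. -/
def IsBentP (n : ℕ) (f : Bv n × Bv n → ZMod 2) : Prop :=
  ∀ a : Bv n × Bv n,
    |∑ x : Bv n × Bv n, (if f x + ipP n a x = 0 then (1:ℤ) else -1)| = 2^n

/-- The sign character on `ZMod 2`. -/
def E2 (u : ZMod 2) : ℤ := if u = 0 then 1 else -1

lemma E2_zero : E2 0 = 1 := rfl

lemma E2_add (u v : ZMod 2) : E2 (u + v) = E2 u * E2 v := by
  revert u v; decide

lemma E2_sum {ι : Type*} (s : Finset ι) (f : ι → ZMod 2) :
    E2 (∑ i ∈ s, f i) = ∏ i ∈ s, E2 (f i) := by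
  classical
  induction s using Finset.induction with
  | empty => simp [E2_zero]
  | insert _ _ hx ih => simp [Finset.sum_insert hx, Finset.prod_insert hx, E2_add, ih]

lemma sum_E2_single (t : ZMod 2) :
    ∑ b : ZMod 2, E2 (b * t) = if t = 0 then 2 else 0 := by
  revert t; decide

lemma sum_E2_ip (n : ℕ) (c : Bv n) :
    ∑ x : Bv n, E2 (ip n x c) = if c = 0 then (2:ℤ)^n else 0 := by
  classical
  have h1 : ∀ x : Bv n, E2 (ip n x c) = ∏ i, E2 (x i * c i) := fun x => by
    rw [ip, E2_sum]
  simp_rw [h1]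
  rw [← Fintype.piFinset_univ, ← Finset.prod_univ_sum (fun _ : Fin n => (Finset.univ : Finset (ZMod 2))) (fun i b => E2 (b * c i))]
  have h2 : ∀ i : Fin n, (∑ b : ZMod 2, E2 (b * c i)) = if c i = 0 then 2 else 0 :=
    fun i => sum_E2_single (c i)
  simp_rw [h2]
  by_cases hc : c = 0
  · subst hc; simp
  · rw [if_neg hc]
    obtain ⟨i, hi⟩ : ∃ i, c i ≠ 0 := by
      by_contra hall
      push_neg at hall
      exact hc (funext hall)
    exact Finset.prod_eq_zero (Finset.mem_univ i) (by rw [if_neg hi])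

theorem stmt_16 (n : ℕ) (σ : Bv n → Bv n) (ψ : Bv n → ZMod 2)
    (h : IsBentP n (fun p => ip n p.1 (σ p.2) + ψ p.2)) :
    Function.Bijective σ := by
  classical
  have hsurj : Function.Surjective σ := by
    intro c
    by_contra hc
    push_neg at hc
    have hb := h (c, 0)
    have key : ∀ (y : Bv n) (x : Bv n),
        (if (ip n x (σ y) + ψ y) + ipP n (c, 0) (x, y) = 0 then (1:ℤ) else -1)
          = E2 (ψ y) * E2 (ip n x (σ y + c)) := by
      intro y x
      have h0 : ip n (0 : Bv n) y = 0 := by simp [ip]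
      have hcomm : ip n c x = ip n x c := by
        simp [ip, mul_comm]
      have hadd : ip n x (σ y) + ip n x c = ip n x (σ y + c) := by
        simp [ip, mul_add, Finset.sum_add_distrib]
      have : (ip n x (σ y) + ψ y) + ipP n (c, 0) (x, y)
          = ψ y + ip n x (σ y + c) := by
        simp only [ipP, h0, hcomm]
        rw [← hadd]; ring
      rw [this, ← E2_add]
      rfl
    have hS : (∑ p : Bv n × Bv n,
        (if (ip n p.1 (σ p.2) + ψ p.2) + ipP n (c, 0) p = 0 then (1:ℤ) else -1)) = 0 := by
      rw [Fintype.sum_prod_type]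
      rw [Finset.sum_comm]
      have : ∀ y : Bv n, (∑ x : Bv n,
          (if (ip n x (σ y) + ψ y) + ipP n (c, 0) (x, y) = 0 then (1:ℤ) else -1)) = 0 := by
        intro y
        calc (∑ x : Bv n,
            (if (ip n x (σ y) + ψ y) + ipP n (c, 0) (x, y) = 0 then (1:ℤ) else -1))
            = ∑ x : Bv n, E2 (ψ y) * E2 (ip n x (σ y + c)) := by
              exact Finset.sum_congr rfl (fun x _ => key y x)
          _ = E2 (ψ y) * ∑ x : Bv n, E2 (ip n x (σ y + c)) := by rw [Finset.mul_sum]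
          _ = 0 := by
              rw [sum_E2_ip]
              have : σ y + c ≠ 0 := by
                intro hz
                apply hc y
                funext i
                have h3 : σ y i + c i = 0 := congrFun hz i
                revert h3
                generalize σ y i = u
                generalize c i = v
                revert u v
                decide
              rw [if_neg this, mul_zero]
      simp [this]
    rw [hS] at hb
    simp at hb
    exact (pow_ne_zero n (two_ne_zero)) hb.symm
  exact Finite.surjective_iff_bijective.mp hsurj
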